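/- Let Δt > 0 with ρΔt ∈ (0, 1), let β > 0 and β_Σ > 0 satisfy the equation 0 = (1−ρΔt)β²β_Σ² − (2−ρΔt + β_Σγ Δt)(σ_K/σ_S)²ββ_Σ + (σ_K/σ_S)⁴(1−βγΔt), define λ := β_Σσ_S²/(σ_K² + β_Σ²σ_S²), η := 1 − λβ_Σ, φ := 1 − λβ/(1−λβ_Σ), and assume λβ_Σ < 1 and φ ∈ (0, 1). Let (E, ζ) be the unique pair with E > 0, ζ > 0 satisfying E/(1−ρΔt) = 2λζ and ζ = (E+γΔt)/(E+γΔt+2λ); define A := (1−ρΔt)(1−φ)²γΔt/(1−(1−ρΔt)(1−φ)²), B := (1−ρΔt)β(2(1−λβ_Σ) − β(A+γΔt)), C := (1−ρΔt)(β(1−φ)(A+γΔt) + φ(1−λβ_Σ)), D := (1−ρΔt)Bσ_S²/(2ρ), F by F/(1−ρΔt) = (λφζ + (1−ζ)(1−φ)γΔt)/(φ + (1−φ)(ζ(1−ρΔt)+ρΔt)), and G by G/(1−ρΔt) = −β(1−ζ)(F+γΔt) + ζ(λβ − η). Define f(M, ΔS, Z; ΔZ) := (ηΔS − λΔZ)(βΔS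 − φM + ΔZ) − (γΔt/2)(βΔS + (1−φ)M + Z + ΔZ)², v(M, ΔS, Z) := −(A/2)M² + (B/2)ΔS² − C·M·ΔS + D − (E/2)Z² − F·M·Z + G·ΔS·Z, and w(m, z) := −(A/2)m² + (B/2)σ_S²Δt + D − (E/2)z² − F·m·z. Then for all real M, ΔS, Z, the function ΔZ ↦ f(M, ΔS, Z; ΔZ) + w(βΔS + (1−φ)M, Z + ΔZ) attains its supremum over ΔZ ∈ ℝ at ΔZ = −ζZ, and the supremum equals v(M, ΔS, Z)/(1−ρΔt). -/

import Mathlib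

set_option maxHeartbeats 1000000 in
/-- dynamic programming equation: with the equilibrium quantities
`λ, η, φ, E, ζ, A, B, C, D, F, G` as in the paper, the per-period reward `f`, the
candidate value function `v`, and `w(m, z) = E[v(m, σ_S√Δt·X, z)]` for standard
Gaussian X, the map `ΔZ ↦ f(M, ΔS, Z; ΔZ) + w(βΔS + (1−φ)M, Z + ΔZ)` attains its
supremum at `ΔZ = −ζZ`, and the supremum equals `v(M, ΔS, Z)/(1−ρΔt)`. -/
theorem stmt17 (σS σK γ ρ Δt β βSum lam η φ E ζ A B C D F G : ℝ)
    (hσS : 0 < σS) (hσK : 0 < σK) (hγ : 0 < γ) (hρ : 0 < ρ)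
    (hΔt : 0 < Δt) (hρΔt : ρ * Δt < 1)
    (hβ : 0 < β) (hβSum : 0 < βSum)
    (heq : 0 = (1 - ρ * Δt) * β ^ 2 * βSum ^ 2
        - (2 - ρ * Δt + βSum * γ * Δt) * (σK / σS) ^ 2 * β * βSum
        + (σK / σS) ^ 4 * (1 - β * γ * Δt))
    (hlam : lam = βSum * σS ^ 2 / (σK ^ 2 + βSum ^ 2 * σS ^ 2))
    (hη : η = 1 - lam * βSum)
    (hφ : φ = 1 - lam * β / (1 - lam * βSum))
    (hlamβSum : lam * βSum < 1) (hφ0 : 0 < φ) (hφ1 : φ < 1)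
    (hE : 0 < E) (hζ : 0 < ζ)
    (hEζ : E / (1 - ρ * Δt) = 2 * lam * ζ)
    (hζeq : ζ = (E + γ * Δt) / (E + γ * Δt + 2 * lam))
    (hA : A = (1 - ρ * Δt) * (1 - φ) ^ 2 * γ * Δt / (1 - (1 - ρ * Δt) * (1 - φ) ^ 2))
    (hB : B = (1 - ρ * Δt) * β * (2 * (1 - lam * βSum) - β * (A + γ * Δt)))
    (hC : C = (1 - ρ * Δt) * (β * (1 - φ) * (A + γ * Δt) + φ * (1 - lam * βSum)))
    (hD : D = (1 - ρ * Δt) * B * σS ^ 2 / (2 * ρ))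
    (hF : F / (1 - ρ * Δt)
        = (lam * φ * ζ + (1 - ζ) * (1 - φ) * γ * Δt)
            / (φ + (1 - φ) * (ζ * (1 - ρ * Δt) + ρ * Δt)))
    (hG : G / (1 - ρ * Δt) = -β * (1 - ζ) * (F + γ * Δt) + ζ * (lam * β - η))
    (f : ℝ → ℝ → ℝ → ℝ → ℝ)
    (hf : ∀ M ΔS Z ΔZ, f M ΔS Z ΔZ
        = (η * ΔS - lam * ΔZ) * (β * ΔS - φ * M + ΔZ)
          - γ * Δt / 2 * (β * ΔS + (1 - φ) * M + Z + ΔZ) ^ 2)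
    (v : ℝ → ℝ → ℝ → ℝ)
    (hv : ∀ M ΔS Z, v M ΔS Z
        = -(A / 2) * M ^ 2 + B / 2 * ΔS ^ 2 - C * M * ΔS + D
          - E / 2 * Z ^ 2 - F * M * Z + G * ΔS * Z)
    (w : ℝ → ℝ → ℝ)
    (hw : ∀ m z, w m z
        = -(A / 2) * m ^ 2 + B / 2 * σS ^ 2 * Δt + D - E / 2 * z ^ 2 - F * m * z) :
    ∀ M ΔS Z : ℝ,
      (∀ ΔZ : ℝ, f M ΔS Z ΔZ + w (β * ΔS + (1 - φ) * M) (Z + ΔZ)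
          ≤ f M ΔS Z (-ζ * Z) + w (β * ΔS + (1 - φ) * M) (Z + -ζ * Z)) ∧
      f M ΔS Z (-ζ * Z) + w (β * ΔS + (1 - φ) * M) (Z + -ζ * Z)
        = v M ΔS Z / (1 - ρ * Δt) := by
  have hu : (0:ℝ) < 1 - ρ * Δt := by linarith
  have hune : (1 - ρ * Δt) ≠ 0 := ne_of_gt hu
  have hσSne : σS ≠ 0 := ne_of_gt hσS
  have hσKne : σK ≠ 0 := ne_of_gt hσK
  have hdpos : (0:ℝ) < σK ^ 2 + βSum ^ 2 * σS ^ 2 := by positivity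
  have hlampos : 0 < lam := by rw [hlam]; positivity
  have hηpos : 0 < 1 - lam * βSum := by linarith
  have h1φ : 0 < 1 - φ := by linarith
  have hgdt : 0 < γ * Δt := mul_pos hγ hΔt
  have hρΔt0 : 0 < ρ * Δt := mul_pos hρ hΔt
  have hlam2 : lam * (σK ^ 2 + βSum ^ 2 * σS ^ 2) = βSum * σS ^ 2 := by
    rw [hlam]; field_simp
  have heq2 : 0 = (1 - ρ * Δt) * β ^ 2 * βSum ^ 2 * σS ^ 4
      - (2 - ρ * Δt + βSum * γ * Δt) * σK ^ 2 * σS ^ 2 * β * βSum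
      + σK ^ 4 * (1 - β * γ * Δt) := by
    have h := heq
    field_simp at h
    have h3 : σS ^ 2 * (0:ℝ)
        = σS ^ 2 * ((1 - ρ * Δt) * β ^ 2 * βSum ^ 2 * σS ^ 4
          - (2 - ρ * Δt + βSum * γ * Δt) * σK ^ 2 * σS ^ 2 * β * βSum
          + σK ^ 4 * (1 - β * γ * Δt)) := by linear_combination σS ^ 2 * h
    exact mul_left_cancel₀ (pow_ne_zero 2 hσSne) h3
  have hlb : lam * β = (1 - lam * βSum) * (1 - φ) := by
    rw [hφ]; field_simp; ring
  have t2 : (σK ^ 2 + βSum ^ 2 * σS ^ 2) ^ 2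
        * (β * ((1 - ρ * Δt) * lam * ((1 - lam * βSum) - lam * β)
            + γ * Δt * (1 - lam * βSum)))
      = (σK ^ 2 + βSum ^ 2 * σS ^ 2) ^ 2
        * ((1 - lam * βSum) * ((1 - lam * βSum) - lam * β)) := by
    linear_combination heq2
      + (lam * (σK ^ 2 + βSum ^ 2 * σS ^ 2) * (β + βSum) * (ρ * Δt * β - β - βSum)
        + 2 * βSum * σK ^ 2 + βSum ^ 3 * σS ^ 2 + 2 * β * σK ^ 2
        - β ^ 2 * βSum * σS ^ 2 - γ * Δt * β * βSum * σK ^ 2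
        - γ * Δt * β * βSum ^ 3 * σS ^ 2 - ρ * Δt * β * σK ^ 2
        + ρ * Δt * β ^ 2 * βSum * σS ^ 2) * hlam2
  have t2' : β * ((1 - ρ * Δt) * lam * ((1 - lam * βSum) - lam * β)
        + γ * Δt * (1 - lam * βSum))
      = (1 - lam * βSum) * ((1 - lam * βSum) - lam * β) :=
    mul_left_cancel₀ (pow_ne_zero 2 hdpos.ne') t2
  have hb2 : (1 - lam * βSum) ^ 2 * ((1 - φ) * ((1 - ρ * Δt) * lam * φ + γ * Δt))
      = (1 - lam * βSum) ^ 2 * (lam * φ) := by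
    linear_combination lam * t2'
      + ((1 - ρ * Δt) * lam ^ 2 * β - (1 - ρ * Δt) * lam * (1 - lam * βSum) * φ
        - γ * Δt * (1 - lam * βSum) - lam * (1 - lam * βSum)) * hlb
  have hb : (1 - φ) * ((1 - ρ * Δt) * lam * φ + γ * Δt) = lam * φ :=
    mul_left_cancel₀ (pow_ne_zero 2 hηpos.ne') hb2
  have hEGpos : (0:ℝ) < E + γ * Δt + 2 * lam := by linarith
  have hζ2 : ζ * (E + γ * Δt + 2 * lam) = E + γ * Δt := by
    rw [hζeq]; field_simp
  have hζ3 : (1 - ζ) * (E + γ * Δt) = 2 * lam * ζ := by linear_combination -hζ2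
  have hEe : E = 2 * lam * ζ * (1 - ρ * Δt) := by
    rw [div_eq_iff hune] at hEζ; exact hEζ
  have hGE : G = (-β * (1 - ζ) * (F + γ * Δt) + ζ * (lam * β - η)) * (1 - ρ * Δt) := by
    rw [div_eq_iff hune] at hG; exact hG
  have hDenpos : 0 < φ + (1 - φ) * (ζ * (1 - ρ * Δt) + ρ * Δt) := by
    exact add_pos hφ0 (mul_pos h1φ (add_pos (mul_pos hζ hu) hρΔt0))
  have hN : lam * φ * ζ + (1 - ζ) * (1 - φ) * γ * Δt
      = lam * φ * (φ + (1 - φ) * (ζ * (1 - ρ * Δt) + ρ * Δt)) := by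
    linear_combination (1 - ζ) * hb
  have hFe : F = (1 - ρ * Δt) * lam * φ := by
    rw [hN, mul_div_assoc, div_self hDenpos.ne', mul_one, div_eq_iff hune] at hF
    linear_combination hF
  have hI1 : (1 - φ) * (F + γ * Δt) = lam * φ := by
    linear_combination hb + (1 - φ) * hFe
  have hI2 : β * (F + γ * Δt) = (1 - lam * βSum) * φ := by
    have h : (1 - φ) * (β * (F + γ * Δt)) = (1 - φ) * ((1 - lam * βSum) * φ) := by
      linear_combination β * hI1 + φ * hlb
    exact mul_left_cancel₀ (ne_of_gt h1φ) h
  have hApos : 0 < 1 - (1 - ρ * Δt) * (1 - φ) ^ 2 := by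
    have e2 : (1 - φ) ^ 2 = 1 - φ * (2 - φ) := by ring
    have e3 : (1 - φ) ^ 2 < 1 := by
      rw [e2]
      have := mul_pos hφ0 (show (0:ℝ) < 2 - φ by linarith)
      linarith
    have e4 : (1 - ρ * Δt) * (1 - φ) ^ 2 ≤ 1 * ((1 - φ) ^ 2) :=
      mul_le_mul_of_nonneg_right (by linarith) (sq_nonneg _)
    have e5 : (1:ℝ) * ((1 - φ) ^ 2) = (1 - φ) ^ 2 := one_mul _
    linarith
  have hAe : A * (1 - (1 - ρ * Δt) * (1 - φ) ^ 2) = (1 - ρ * Δt) * (1 - φ) ^ 2 * γ * Δt := by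
    rw [hA]; field_simp
  have hBe : B = (1 - ρ * Δt) * β * (2 * η - β * (A + γ * Δt)) := by
    rw [hη]; linear_combination hB
  have hCe : C = (1 - ρ * Δt) * (β * (1 - φ) * (A + γ * Δt) + φ * η) := by
    rw [hη]; linear_combination hC
  have hDe : 2 * ρ * D = (1 - ρ * Δt) * B * σS ^ 2 := by
    rw [hD]; field_simp
  intro M ΔS Z
  constructor
  · intro ΔZ
    have key : f M ΔS Z ΔZ + w (β * ΔS + (1 - φ) * M) (Z + ΔZ)
        = f M ΔS Z (-ζ * Z) + w (β * ΔS + (1 - φ) * M) (Z + -ζ * Z)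
          - (lam + γ * Δt / 2 + E / 2) * (ΔZ + ζ * Z) ^ 2 := by
      simp only [hf, hw]
      linear_combination (ΔZ + ζ * Z) * (-M) * hI1
        + ((ΔZ + ζ * Z) * ΔS) * (hη - hI2 - hlb)
        + (ΔZ + ζ * Z) * (-Z) * hζ3
    have hnn : 0 ≤ (lam + γ * Δt / 2 + E / 2) * (ΔZ + ζ * Z) ^ 2 :=
      mul_nonneg (by linarith) (sq_nonneg _)
    linarith [key, hnn]
  · simp only [hf, hv, hw]
    rw [eq_div_iff hune]
    linear_combination (M ^ 2 / 2) * hAe - (ΔS ^ 2 / 2) * hBe + (M * ΔS) * hCe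
      - (M * Z * (1 - ρ * Δt) * (1 - ζ)) * hI1 + (M * Z) * hFe - (ΔS * Z) * hGE
      - (Z ^ 2 * (1 - ρ * Δt) * (1 - ζ) / 2) * hζ3 + (Z ^ 2 / 2) * hEe
      - (Δt / 2) * hDe
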